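/- Let L be a self-adjoint operator on a Hilbert space H with L + M₀ ≥ 0 for some M₀ ≥ 0, and suppose that for a family of bounded operators w_z (z ranging in some index set) and each 0 ≤ k ≤ N one has ‖Ad_z^k(e^{−tL})‖ ≤ C e^{M₀ t} t^{k/m} for t ∈ (0,1] and ‖Ad_z^k(e^{−tL})‖ ≤ C e^{M₀ t} t^{k/m'} for t ≥ 1 (with m, m' > 0). Then for every M > M₀, the resolvent R = (L+M)⁻¹ satisfies ‖Ad_z^k(R)‖ ≤ C' ((M−M₀)^{−1−k/m} + (M−M₀)^{−1−k/m'}) for 0 ≤ k ≤ N, with C' independent of z and M. -/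

import Mathlib

open MeasureTheory

/-- Iterated commutator of `T` with `w`. -/
def adPow {A : Type*} [Ring A] (w T : A) : ℕ → A
  | 0 => T
  | k + 1 => w * adPow w T k - adPow w T k * w

noncomputable section AdAux

variable {H : Type*} [NormedAddCommGroup H] [InnerProductSpace ℂ H] [CompleteSpace H]

/-- The commutator with `w` as a continuous linear map. -/
noncomputable def adCLM (w : H →L[ℂ] H) : (H →L[ℂ] H) →L[ℂ] (H →L[ℂ] H) :=
  ContinuousLinearMap.mul ℂ (H →L[ℂ] H) w - (ContinuousLinearMap.mul ℂ (H →L[ℂ] H)).flip w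

lemma adCLM_apply (w T : H →L[ℂ] H) : adCLM w T = w * T - T * w := rfl

lemma adPow_eq_pow (w T : H →L[ℂ] H) (k : ℕ) : adPow w T k = ((adCLM w) ^ k) T := by
  induction k with
  | zero => simp [adPow]
  | succ k ih =>
    rw [adPow, ih, pow_succ']
    simp [ContinuousLinearMap.mul_apply, adCLM_apply]

end AdAux

set_option maxHeartbeats 1000000 in
/-- if the iterated commutators of the heat semigroup `S t = e^{−tL}`
with a family of bounded operators `w z` satisfy
`‖Ad_z^k(e^{−tL})‖ ≤ C e^{M₀t} t^{k/m}` for `0 < t ≤ 1` and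
`‖Ad_z^k(e^{−tL})‖ ≤ C e^{M₀t} t^{k/m'}` for `t ≥ 1`, then for `M > M₀` the resolvent
`R = (L+M)⁻¹ = ∫₀^∞ e^{−Mt} e^{−tL} dt` satisfies
`‖Ad_z^k(R)‖ ≤ C' ((M−M₀)^{−1−k/m} + (M−M₀)^{−1−k/m'})` uniformly in `z` and `M`. -/
theorem adPow_resolvent_bound
    {H : Type*} [NormedAddCommGroup H] [InnerProductSpace ℂ H] [CompleteSpace H]
    {ι : Type*} (S : ℝ → H →L[ℂ] H) (w : ι → H →L[ℂ] H)
    (M₀ m m' C : ℝ) (N : ℕ)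
    (hM₀ : 0 ≤ M₀) (hm : 0 < m) (hm' : 0 < m') (hC : 0 < C)
    (hmeas : StronglyMeasurable S)
    (hsmall : ∀ z : ι, ∀ k ≤ N, ∀ t : ℝ, 0 < t → t ≤ 1 →
      ‖adPow (w z) (S t) k‖ ≤ C * Real.exp (M₀ * t) * t ^ ((k : ℝ) / m))
    (hlarge : ∀ z : ι, ∀ k ≤ N, ∀ t : ℝ, 1 ≤ t →
      ‖adPow (w z) (S t) k‖ ≤ C * Real.exp (M₀ * t) * t ^ ((k : ℝ) / m')) :
    ∃ C' : ℝ, 0 < C' ∧ ∀ M : ℝ, M₀ < M → ∀ z : ι, ∀ k ≤ N,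
      ‖adPow (w z) (∫ t in Set.Ioi (0 : ℝ), Real.exp (-M * t) • S t) k‖ ≤
        C' * ((M - M₀) ^ (-1 - (k : ℝ) / m) + (M - M₀) ^ (-1 - (k : ℝ) / m')) := by
  classical
  set G : ℝ := ∑ k ∈ Finset.range (N + 1),
      (Real.Gamma (1 + (k : ℝ) / m) + Real.Gamma (1 + (k : ℝ) / m')) with hGdef
  have hGam : ∀ k : ℕ, k ≤ N →
      Real.Gamma (1 + (k : ℝ) / m) ≤ G ∧ Real.Gamma (1 + (k : ℝ) / m') ≤ G := by
    intro k hk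
    have hmem : k ∈ Finset.range (N + 1) := Finset.mem_range.mpr (Nat.lt_succ_of_le hk)
    have hterm : Real.Gamma (1 + (k : ℝ) / m) + Real.Gamma (1 + (k : ℝ) / m') ≤ G := by
      refine Finset.single_le_sum (f := fun j : ℕ =>
        Real.Gamma (1 + (j : ℝ) / m) + Real.Gamma (1 + (j : ℝ) / m')) ?_ hmem
      intro j _
      have h1 : 0 < Real.Gamma (1 + (j : ℝ) / m) := by positivity
      have h2 : 0 < Real.Gamma (1 + (j : ℝ) / m') := by positivity
      linarith
    have h1 : 0 < Real.Gamma (1 + (k : ℝ) / m) := by positivity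
    have h2 : 0 < Real.Gamma (1 + (k : ℝ) / m') := by positivity
    constructor <;> linarith
  have hG : 0 < G := by
    have := (hGam 0 (Nat.zero_le N)).1
    have h1 : 0 < Real.Gamma (1 + (0 : ℝ) / m) := by positivity
    simpa using lt_of_lt_of_le h1 (by simpa using this)
  refine ⟨C * G, by positivity, ?_⟩
  intro M hM z k hk
  set r : ℝ := M - M₀ with hrdef
  have hr0 : 0 < r := sub_pos.mpr hM
  set f : ℝ → (H →L[ℂ] H) := fun t => Real.exp (-M * t) • S t with hfdef
  -- basic bound on ‖S t‖ for t > 0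
  have hS : ∀ t : ℝ, 0 < t → ‖S t‖ ≤ C * Real.exp (M₀ * t) := by
    intro t ht
    rcases le_or_gt t 1 with h | h
    · have := hsmall z 0 (Nat.zero_le N) t ht h
      simpa [adPow, Real.rpow_natCast] using this
    · have := hlarge z 0 (Nat.zero_le N) t h.le
      simpa [adPow] using this
  -- integrability of f on Ioi 0
  have hfmeas : AEStronglyMeasurable f (volume.restrict (Set.Ioi (0 : ℝ))) := by
    exact (((Real.continuous_exp.comp (continuous_const.mul continuous_id)).stronglyMeasurable).smul
      hmeas).aestronglyMeasurable
  have hgint : IntegrableOn (fun t : ℝ => C * Real.exp (-r * t)) (Set.Ioi (0 : ℝ)) := by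
    exact (exp_neg_integrableOn_Ioi 0 hr0).const_mul C
  have hfint : IntegrableOn f (Set.Ioi (0 : ℝ)) := by
    refine Integrable.mono' hgint hfmeas ?_
    filter_upwards [ae_restrict_mem measurableSet_Ioi] with t ht
    have ht0 : (0 : ℝ) < t := ht
    have : ‖f t‖ = Real.exp (-M * t) * ‖S t‖ := by
      simp [hfdef, norm_smul, Real.abs_exp]
    rw [this]
    calc Real.exp (-M * t) * ‖S t‖ ≤ Real.exp (-M * t) * (C * Real.exp (M₀ * t)) := by
          exact mul_le_mul_of_nonneg_left (hS t ht0) (Real.exp_nonneg _)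
      _ = C * Real.exp (-r * t) := by
          have hE : Real.exp (-M * t) * Real.exp (M₀ * t) = Real.exp (-r * t) := by
            rw [← Real.exp_add]; congr 1; rw [hrdef]; ring
          rw [← hE]; ring
  -- commute adPow with integral
  have hcomm : adPow (w z) (∫ t in Set.Ioi (0 : ℝ), f t) k
      = ∫ t in Set.Ioi (0 : ℝ), adPow (w z) (f t) k := by
    rw [adPow_eq_pow, ← ContinuousLinearMap.integral_comp_comm _ hfint]
    simp_rw [adPow_eq_pow]
  -- the pointwise bound
  set B : ℝ → ℝ := fun t => C * (t ^ ((k : ℝ) / m) * Real.exp (-r * t)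
      + t ^ ((k : ℝ) / m') * Real.exp (-r * t)) with hBdef
  have hptwise : ∀ t : ℝ, t ∈ Set.Ioi (0 : ℝ) → ‖adPow (w z) (f t) k‖ ≤ B t := by
    intro t ht
    have ht0 : (0 : ℝ) < t := ht
    have hsm : adPow (w z) (f t) k = Real.exp (-M * t) • adPow (w z) (S t) k := by
      rw [adPow_eq_pow, adPow_eq_pow, hfdef]
      exact ContinuousLinearMap.map_smul_of_tower _ _ _
    have hnorm : ‖adPow (w z) (f t) k‖ = Real.exp (-M * t) * ‖adPow (w z) (S t) k‖ := by
      rw [hsm, norm_smul, Real.norm_eq_abs, Real.abs_exp]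
    rw [hnorm]
    have hbd : ‖adPow (w z) (S t) k‖ ≤
        C * Real.exp (M₀ * t) * (t ^ ((k : ℝ) / m) + t ^ ((k : ℝ) / m')) := by
      rcases le_or_gt t 1 with h | h
      · have h1 := hsmall z k hk t ht0 h
        have h2 : (0:ℝ) ≤ C * Real.exp (M₀ * t) * t ^ ((k : ℝ) / m') := by positivity
        rw [mul_add]; linarith
      · have h1 := hlarge z k hk t h.le
        have h2 : (0:ℝ) ≤ C * Real.exp (M₀ * t) * t ^ ((k : ℝ) / m) := by positivity
        rw [mul_add]; linarith
    calc Real.exp (-M * t) * ‖adPow (w z) (S t) k‖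
        ≤ Real.exp (-M * t) * (C * Real.exp (M₀ * t) * (t ^ ((k : ℝ) / m) + t ^ ((k : ℝ) / m'))) :=
          mul_le_mul_of_nonneg_left hbd (Real.exp_nonneg _)
      _ = B t := by
          have hE : Real.exp (-M * t) * Real.exp (M₀ * t) = Real.exp (-r * t) := by
            rw [← Real.exp_add]; congr 1; rw [hrdef]; ring
          rw [hBdef]
          simp only [← hE]
          ring
  -- integrability of the pieces
  have hint1 : IntegrableOn (fun t : ℝ => t ^ ((k : ℝ) / m) * Real.exp (-r * t))
      (Set.Ioi (0 : ℝ)) := by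
    have := integrableOn_rpow_mul_exp_neg_mul_rpow
      (show (-1 : ℝ) < (k : ℝ) / m by
        have : (0:ℝ) ≤ (k : ℝ) / m := by positivity
        linarith) (zero_lt_one' ℝ) hr0
    simpa [Real.rpow_one] using this
  have hint1' : IntegrableOn (fun t : ℝ => t ^ ((k : ℝ) / m') * Real.exp (-r * t))
      (Set.Ioi (0 : ℝ)) := by
    have := integrableOn_rpow_mul_exp_neg_mul_rpow
      (show (-1 : ℝ) < (k : ℝ) / m' by
        have : (0:ℝ) ≤ (k : ℝ) / m' := by positivity
        linarith) (zero_lt_one' ℝ) hr0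
    simpa [Real.rpow_one] using this
  have hBint : IntegrableOn B (Set.Ioi (0 : ℝ)) := ((hint1.add hint1').const_mul C)
  have hadint : IntegrableOn (fun t => adPow (w z) (f t) k) (Set.Ioi (0 : ℝ)) := by
    have : IntegrableOn (fun t => ((adCLM (w z)) ^ k) (f t)) (Set.Ioi (0 : ℝ)) :=
      ContinuousLinearMap.integrable_comp _ hfint
    simpa [adPow_eq_pow] using this
  -- Gamma integrals
  have hval : ∀ a : ℝ, 0 ≤ a →
      ∫ t in Set.Ioi (0 : ℝ), t ^ a * Real.exp (-r * t)
        = (1 / r) ^ (a + 1) * Real.Gamma (a + 1) := by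
    intro a ha
    have := Real.integral_rpow_mul_exp_neg_mul_Ioi (a := a + 1) (r := r) (by linarith) hr0
    simp only [add_sub_cancel_right] at this
    rw [← this]
    refine setIntegral_congr_fun measurableSet_Ioi (fun t ht => ?_)
    rw [neg_mul]
  -- putting it together
  rw [hcomm]
  have step1 : ‖∫ t in Set.Ioi (0 : ℝ), adPow (w z) (f t) k‖
      ≤ ∫ t in Set.Ioi (0 : ℝ), B t := by
    refine (norm_integral_le_integral_norm _).trans ?_
    exact setIntegral_mono_on hadint.norm hBint measurableSet_Ioi hptwise
  refine step1.trans ?_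
  have hBval : ∫ t in Set.Ioi (0 : ℝ), B t
      = C * ((1 / r) ^ ((k : ℝ) / m + 1) * Real.Gamma ((k : ℝ) / m + 1)
           + (1 / r) ^ ((k : ℝ) / m' + 1) * Real.Gamma ((k : ℝ) / m' + 1)) := by
    rw [hBdef]
    rw [integral_const_mul _ _, integral_add hint1 hint1',
      hval ((k : ℝ) / m) (by positivity), hval ((k : ℝ) / m') (by positivity)]
  rw [hBval]
  have hpow : ∀ a : ℝ, (1 / r) ^ (a + 1) = r ^ (-1 - a) := by
    intro a
    rw [one_div, Real.inv_rpow hr0.le, ← Real.rpow_neg hr0.le]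
    congr 1; ring
  rw [hpow, hpow]
  have g1 := (hGam k hk).1
  have g2 := (hGam k hk).2
  have hx1 : (0:ℝ) ≤ r ^ (-1 - (k:ℝ)/m) := (Real.rpow_pos_of_pos hr0 _).le
  have hx2 : (0:ℝ) ≤ r ^ (-1 - (k:ℝ)/m') := (Real.rpow_pos_of_pos hr0 _).le
  have e1 : r ^ (-1 - (k:ℝ)/m) * Real.Gamma ((k:ℝ)/m + 1) ≤ r ^ (-1 - (k:ℝ)/m) * G := by
    refine mul_le_mul_of_nonneg_left ?_ hx1
    rw [add_comm]; exact g1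
  have e2 : r ^ (-1 - (k:ℝ)/m') * Real.Gamma ((k:ℝ)/m' + 1) ≤ r ^ (-1 - (k:ℝ)/m') * G := by
    refine mul_le_mul_of_nonneg_left ?_ hx2
    rw [add_comm]; exact g2
  calc C * (r ^ (-1 - (k:ℝ)/m) * Real.Gamma ((k:ℝ)/m + 1)
        + r ^ (-1 - (k:ℝ)/m') * Real.Gamma ((k:ℝ)/m' + 1))
      ≤ C * (r ^ (-1 - (k:ℝ)/m) * G + r ^ (-1 - (k:ℝ)/m') * G) :=
        mul_le_mul_of_nonneg_left (add_le_add e1 e2) hC.le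
    _ = C * G * (r ^ (-1 - (k:ℝ)/m) + r ^ (-1 - (k:ℝ)/m')) := by ring
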